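/- Let T be a bimonad on a monoidal category C. An R-matrix for T (a convolution-invertible natural transformation R_{X,Y} : X⊗Y → T(Y)⊗T(X) satisfying the three R-matrix axioms) induces a braiding τ on the category of T-modules by τ_{(M,r),(N,s)} = (s⊗r)∘R_{M,N}, and this assignment is a bijection between R-matrices for T and braidings on T-Mod. -/

import Mathlib

open CategoryTheory MonoidalCategory

namespace HopfMonadPaper

variable {C : Type*} [Category C] [MonoidalCategory C]

/-- A comonoidal (oplax monoidal) structure on an endofunctor `T`,
with coproduct `δ X Y : T(X ⊗ Y) ⟶ T(X) ⊗ T(Y)` and counit `ε : T(𝟙) ⟶ 𝟙`. -/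
structure Comonoidal (T : C ⥤ C) where
  δ : ∀ X Y : C, T.obj (X ⊗ Y) ⟶ T.obj X ⊗ T.obj Y
  ε : T.obj (𝟙_ C) ⟶ 𝟙_ C
  δ_natural : ∀ {X X' Y Y' : C} (f : X ⟶ X') (g : Y ⟶ Y'),
    T.map (f ⊗ₘ g) ≫ δ X' Y' = δ X Y ≫ (T.map f ⊗ₘ T.map g)
  coassoc : ∀ X Y Z : C,
    δ (X ⊗ Y) Z ≫ (δ X Y ⊗ₘ 𝟙 (T.obj Z)) ≫ (α_ (T.obj X) (T.obj Y) (T.obj Z)).hom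
      = T.map (α_ X Y Z).hom ≫ δ X (Y ⊗ Z) ≫ (𝟙 (T.obj X) ⊗ₘ δ Y Z)
  counit_left : ∀ X : C,
    δ (𝟙_ C) X ≫ (ε ⊗ₘ 𝟙 (T.obj X)) ≫ (λ_ (T.obj X)).hom = T.map (λ_ X).hom
  counit_right : ∀ X : C,
    δ X (𝟙_ C) ≫ (𝟙 (T.obj X) ⊗ₘ ε) ≫ (ρ_ (T.obj X)).hom = T.map (ρ_ X).hom

/-- The bimonad axioms: the product and unit of the monad are comonoidal. -/
structure IsBimonad (T : Monad C) (Q : Comonoidal T.toFunctor) : Prop where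
  mu_δ : ∀ X Y : C, T.μ.app (X ⊗ Y) ≫ Q.δ X Y
    = T.map (Q.δ X Y) ≫ Q.δ (T.obj X) (T.obj Y) ≫ (T.μ.app X ⊗ₘ T.μ.app Y)
  mu_ε : T.μ.app (𝟙_ C) ≫ Q.ε = T.map Q.ε ≫ Q.ε
  eta_δ : ∀ X Y : C, T.η.app (X ⊗ Y) ≫ Q.δ X Y = T.η.app X ⊗ₘ T.η.app Y
  eta_ε : T.η.app (𝟙_ C) ≫ Q.ε = 𝟙 (𝟙_ C)

/-- A choice of left duals: `d X = ˡX` with evaluation `ev X : ˡX ⊗ₘ X ⟶ 𝟙`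
and coevaluation `coev X : 𝟙 ⟶ X ⊗ₘ ˡX`, satisfying the triangle identities. -/
structure LeftDualData (C : Type*) [Category C] [MonoidalCategory C] where
  d : C → C
  ev : ∀ X : C, d X ⊗ X ⟶ 𝟙_ C
  coev : ∀ X : C, 𝟙_ C ⟶ X ⊗ d X
  tri1 : ∀ X : C, (ρ_ (d X)).inv ≫ (𝟙 (d X) ⊗ₘ coev X) ≫ (α_ (d X) X (d X)).inv
    ≫ (ev X ⊗ₘ 𝟙 (d X)) ≫ (λ_ (d X)).hom = 𝟙 (d X)
  tri2 : ∀ X : C, (λ_ X).inv ≫ (coev X ⊗ₘ 𝟙 X) ≫ (α_ X (d X) X).hom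
    ≫ (𝟙 X ⊗ₘ ev X) ≫ (ρ_ X).hom = 𝟙 X

/-- Left transpose (left dual) of a morphism. -/
def LeftDualData.tr (L : LeftDualData C) {X Y : C} (f : X ⟶ Y) : L.d Y ⟶ L.d X :=
  (ρ_ (L.d Y)).inv ≫ (𝟙 (L.d Y) ⊗ₘ L.coev X) ≫ (𝟙 (L.d Y) ⊗ₘ (f ⊗ₘ 𝟙 (L.d X)))
    ≫ (α_ (L.d Y) Y (L.d X)).inv ≫ (L.ev Y ⊗ₘ 𝟙 (L.d X)) ≫ (λ_ (L.d X)).hom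

/-- A choice of right duals: `d X = ʳX` with evaluation `ev X : X ⊗ₘ ʳX ⟶ 𝟙`
and coevaluation `coev X : 𝟙 ⟶ ʳX ⊗ₘ X`, satisfying the triangle identities. -/
structure RightDualData (C : Type*) [Category C] [MonoidalCategory C] where
  d : C → C
  ev : ∀ X : C, X ⊗ d X ⟶ 𝟙_ C
  coev : ∀ X : C, 𝟙_ C ⟶ d X ⊗ X
  tri1 : ∀ X : C, (ρ_ X).inv ≫ (𝟙 X ⊗ₘ coev X) ≫ (α_ X (d X) X).inv
    ≫ (ev X ⊗ₘ 𝟙 X) ≫ (λ_ X).hom = 𝟙 X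
  tri2 : ∀ X : C, (λ_ (d X)).inv ≫ (coev X ⊗ₘ 𝟙 (d X)) ≫ (α_ (d X) X (d X)).hom
    ≫ (𝟙 (d X) ⊗ₘ ev X) ≫ (ρ_ (d X)).hom = 𝟙 (d X)

/-- Right transpose (right dual) of a morphism. -/
def RightDualData.tr (R : RightDualData C) {X Y : C} (f : X ⟶ Y) : R.d Y ⟶ R.d X :=
  (λ_ (R.d Y)).inv ≫ (R.coev X ⊗ₘ 𝟙 (R.d Y)) ≫ (α_ (R.d X) X (R.d Y)).hom
    ≫ (𝟙 (R.d X) ⊗ₘ (f ⊗ₘ 𝟙 (R.d Y))) ≫ (𝟙 (R.d X) ⊗ₘ R.ev Y) ≫ (ρ_ (R.d X)).hom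

/-- The axioms for a left antipode `s X : T(ˡT(X)) ⟶ ˡX` of a bimonad. -/
structure IsLeftAntipode (T : Monad C) (Q : Comonoidal T.toFunctor) (L : LeftDualData C)
    (s : ∀ X : C, T.obj (L.d (T.obj X)) ⟶ L.d X) : Prop where
  natural : ∀ {X Y : C} (f : X ⟶ Y),
    T.map (L.tr (T.map f)) ≫ s X = s Y ≫ L.tr f
  lant1 : ∀ X : C,
    T.map (L.tr (T.η.app X) ⊗ₘ 𝟙 X) ≫ T.map (L.ev X) ≫ Q.ε
      = Q.δ (L.d (T.obj X)) X
        ≫ ((T.map (L.tr (T.μ.app X)) ≫ s (T.obj X)) ⊗ₘ 𝟙 (T.obj X)) ≫ L.ev (T.obj X)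
  lant2 : ∀ X : C,
    Q.ε ≫ L.coev X ≫ (T.η.app X ⊗ₘ 𝟙 (L.d X))
      = T.map (L.coev (T.obj X)) ≫ Q.δ (T.obj X) (L.d (T.obj X)) ≫ (T.μ.app X ⊗ₘ s X)

/-- The axioms for a right antipode `s X : T(ʳT(X)) ⟶ ʳX` of a bimonad. -/
structure IsRightAntipode (T : Monad C) (Q : Comonoidal T.toFunctor) (R : RightDualData C)
    (s : ∀ X : C, T.obj (R.d (T.obj X)) ⟶ R.d X) : Prop where
  natural : ∀ {X Y : C} (f : X ⟶ Y),
    T.map (R.tr (T.map f)) ≫ s X = s Y ≫ R.tr f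
  rant1 : ∀ X : C,
    T.map (𝟙 X ⊗ₘ R.tr (T.η.app X)) ≫ T.map (R.ev X) ≫ Q.ε
      = Q.δ X (R.d (T.obj X))
        ≫ (𝟙 (T.obj X) ⊗ₘ (T.map (R.tr (T.μ.app X)) ≫ s (T.obj X))) ≫ R.ev (T.obj X)
  rant2 : ∀ X : C,
    Q.ε ≫ R.coev X ≫ (𝟙 (R.d X) ⊗ₘ T.η.app X)
      = T.map (R.coev (T.obj X)) ≫ Q.δ (R.d (T.obj X)) (T.obj X) ≫ (s X ⊗ₘ T.μ.app X)

/-- The canonical morphism `X ⟶ ʳ(ˡX)`. -/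
def canRL (L : LeftDualData C) (R : RightDualData C) (X : C) : X ⟶ R.d (L.d X) :=
  (λ_ X).inv ≫ (R.coev (L.d X) ⊗ₘ 𝟙 X) ≫ (α_ (R.d (L.d X)) (L.d X) X).hom
    ≫ (𝟙 (R.d (L.d X)) ⊗ₘ L.ev X) ≫ (ρ_ (R.d (L.d X))).hom

/-- The canonical morphism `ʳ(ˡX) ⟶ X`. -/
def canRLinv (L : LeftDualData C) (R : RightDualData C) (X : C) : R.d (L.d X) ⟶ X :=
  (λ_ (R.d (L.d X))).inv ≫ (L.coev X ⊗ₘ 𝟙 (R.d (L.d X)))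
    ≫ (α_ X (L.d X) (R.d (L.d X))).hom ≫ (𝟙 X ⊗ₘ R.ev (L.d X)) ≫ (ρ_ X).hom

/-- The canonical morphism `X ⟶ ˡ(ʳX)`. -/
def canLR (L : LeftDualData C) (R : RightDualData C) (X : C) : X ⟶ L.d (R.d X) :=
  (ρ_ X).inv ≫ (𝟙 X ⊗ₘ L.coev (R.d X)) ≫ (α_ X (R.d X) (L.d (R.d X))).inv
    ≫ (R.ev X ⊗ₘ 𝟙 (L.d (R.d X))) ≫ (λ_ (L.d (R.d X))).hom

/-- The canonical morphism `ˡ(ʳX) ⟶ X`. -/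
def canLRinv (L : LeftDualData C) (R : RightDualData C) (X : C) : L.d (R.d X) ⟶ X :=
  (ρ_ (L.d (R.d X))).inv ≫ (𝟙 (L.d (R.d X)) ⊗ₘ R.coev X)
    ≫ (α_ (L.d (R.d X)) (R.d X) X).inv ≫ (L.ev (R.d X) ⊗ₘ 𝟙 X) ≫ (λ_ X).hom


/-- The tensor product of two modules over a bimonad (Moerdijk's lifted monoidal
structure): carrier `M.A ⊗ N.A` with action `(M.a ⊗ N.a) ∘ T_2(M.A, N.A)`.
(The algebra axioms are consequences of the bimonad axioms.) -/
def tensorAlgebra (T : Monad C) (Q : Comonoidal T.toFunctor) (hB : IsBimonad T Q)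
    (M N : T.Algebra) : T.Algebra where
  A := M.A ⊗ N.A
  a := Q.δ M.A N.A ≫ (M.a ⊗ₘ N.a)
  unit := by
    rw [← Category.assoc, hB.eta_δ, tensorHom_comp_tensorHom, M.unit, N.unit]
    simp
  assoc := by
    calc T.μ.app (M.A ⊗ N.A) ≫ Q.δ M.A N.A ≫ (M.a ⊗ₘ N.a)
        = (T.map (Q.δ M.A N.A) ≫ Q.δ (T.obj M.A) (T.obj N.A)
            ≫ (T.μ.app M.A ⊗ₘ T.μ.app N.A)) ≫ (M.a ⊗ₘ N.a) := by
          rw [← Category.assoc, hB.mu_δ M.A N.A]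
      _ = T.map (Q.δ M.A N.A) ≫ Q.δ (T.obj M.A) (T.obj N.A)
            ≫ ((T.μ.app M.A ≫ M.a) ⊗ₘ (T.μ.app N.A ≫ N.a)) := by
          simp [Category.assoc, ← tensorHom_comp_tensorHom]
      _ = T.map (Q.δ M.A N.A) ≫ Q.δ (T.obj M.A) (T.obj N.A)
            ≫ ((T.map M.a ≫ M.a) ⊗ₘ (T.map N.a ≫ N.a)) := by
          rw [M.assoc, N.assoc]
      _ = T.map (Q.δ M.A N.A) ≫ (Q.δ (T.obj M.A) (T.obj N.A)
            ≫ (T.map M.a ⊗ₘ T.map N.a)) ≫ (M.a ⊗ₘ N.a) := by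
          simp [Category.assoc, ← tensorHom_comp_tensorHom]
      _ = T.map (Q.δ M.A N.A) ≫ T.map (M.a ⊗ₘ N.a) ≫ Q.δ M.A N.A ≫ (M.a ⊗ₘ N.a) := by
          rw [← Q.δ_natural M.a N.a]; simp [Category.assoc]
      _ = T.map (Q.δ M.A N.A ≫ (M.a ⊗ₘ N.a)) ≫ Q.δ M.A N.A ≫ (M.a ⊗ₘ N.a) := by
          rw [Functor.map_comp]; simp [Category.assoc]

/-- An R-matrix for a bimonad `T`: a convolution-invertible natural family
`R X Y : X ⊗ Y ⟶ T(Y) ⊗ T(X)` satisfying the three R-matrix axioms. -/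
structure IsRMatrix (T : Monad C) (Q : Comonoidal T.toFunctor)
    (R : ∀ X Y : C, X ⊗ Y ⟶ T.obj Y ⊗ T.obj X) : Prop where
  natural : ∀ {X X' Y Y' : C} (f : X ⟶ X') (g : Y ⟶ Y'),
    (f ⊗ₘ g) ≫ R X' Y' = R X Y ≫ (T.map g ⊗ₘ T.map f)
  invertible : ∃ R' : ∀ X Y : C, Y ⊗ X ⟶ T.obj X ⊗ T.obj Y,
    (∀ {X X' Y Y' : C} (f : X ⟶ X') (g : Y ⟶ Y'),
      (g ⊗ₘ f) ≫ R' X' Y' = R' X Y ≫ (T.map f ⊗ₘ T.map g)) ∧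
    (∀ X Y : C, R X Y ≫ R' (T.obj X) (T.obj Y) ≫ (T.μ.app X ⊗ₘ T.μ.app Y)
      = T.η.app X ⊗ₘ T.η.app Y) ∧
    (∀ X Y : C, R' X Y ≫ R (T.obj X) (T.obj Y) ≫ (T.μ.app Y ⊗ₘ T.μ.app X)
      = T.η.app Y ⊗ₘ T.η.app X)
  rmat1 : ∀ X Y : C,
    Q.δ X Y ≫ R (T.obj X) (T.obj Y) ≫ (T.μ.app Y ⊗ₘ T.μ.app X)
      = T.map (R X Y) ≫ Q.δ (T.obj Y) (T.obj X) ≫ (T.μ.app Y ⊗ₘ T.μ.app X)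
  rmat2 : ∀ X Y Z : C,
    R (X ⊗ Y) Z ≫ (𝟙 (T.obj Z) ⊗ₘ Q.δ X Y)
      = (α_ X Y Z).hom ≫ (𝟙 X ⊗ₘ R Y Z) ≫ (α_ X (T.obj Z) (T.obj Y)).inv
        ≫ ((R X (T.obj Z) ≫ (T.μ.app Z ⊗ₘ 𝟙 (T.obj X))) ⊗ₘ 𝟙 (T.obj Y))
        ≫ (α_ (T.obj Z) (T.obj X) (T.obj Y)).hom
  rmat3 : ∀ X Y Z : C,
    R X (Y ⊗ Z) ≫ (Q.δ Y Z ⊗ₘ 𝟙 (T.obj X))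
      = (α_ X Y Z).inv ≫ (R X Y ⊗ₘ 𝟙 Z) ≫ (α_ (T.obj Y) (T.obj X) Z).hom
        ≫ (𝟙 (T.obj Y) ⊗ₘ (R (T.obj X) Z ≫ (𝟙 (T.obj Z) ⊗ₘ T.μ.app X)))
        ≫ (α_ (T.obj Y) (T.obj Z) (T.obj X)).inv

/-- A braiding on the (lifted monoidal) category of modules over a bimonad,
expressed on underlying objects: a `T`-linear natural isomorphism
`τ M N : M ⊗ N ≅ N ⊗ M` satisfying the two hexagon identities. -/
structure IsBraidingOnModules (T : Monad C) (Q : Comonoidal T.toFunctor)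
    (hB : IsBimonad T Q)
    (τ : ∀ M N : T.Algebra, M.A ⊗ N.A ⟶ N.A ⊗ M.A) : Prop where
  natural : ∀ {M M' N N' : T.Algebra} (f : M ⟶ M') (g : N ⟶ N'),
    (f.f ⊗ₘ g.f) ≫ τ M' N' = τ M N ≫ (g.f ⊗ₘ f.f)
  linear : ∀ M N : T.Algebra,
    (Q.δ M.A N.A ≫ (M.a ⊗ₘ N.a)) ≫ τ M N
      = T.map (τ M N) ≫ Q.δ N.A M.A ≫ (N.a ⊗ₘ M.a)
  iso : ∀ M N : T.Algebra, IsIso (τ M N)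
  hex1 : ∀ M N P : T.Algebra,
    τ M (tensorAlgebra T Q hB N P)
      = (α_ M.A N.A P.A).inv ≫ (τ M N ⊗ₘ 𝟙 P.A) ≫ (α_ N.A M.A P.A).hom
        ≫ (𝟙 N.A ⊗ₘ τ M P) ≫ (α_ N.A P.A M.A).inv
  hex2 : ∀ M N P : T.Algebra,
    τ (tensorAlgebra T Q hB M N) P
      = (α_ M.A N.A P.A).hom ≫ (𝟙 M.A ⊗ₘ τ N P) ≫ (α_ M.A P.A N.A).inv
        ≫ (τ M P ⊗ₘ 𝟙 N.A) ≫ (α_ P.A M.A N.A).hom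

section Aux
variable {T : Monad C} {Q : Comonoidal T.toFunctor} {hB : IsBimonad T Q}

set_option maxHeartbeats 1000000 in
theorem forward_dir (R : ∀ X Y : C, X ⊗ Y ⟶ T.obj Y ⊗ T.obj X) (hR : IsRMatrix T Q R) :
    IsBraidingOnModules T Q hB (fun M N => R M.A N.A ≫ (N.a ⊗ₘ M.a)) := by
  constructor
  · -- natural
    intro M M' N N' f g
    rw [← Category.assoc, hR.natural f.f g.f, Category.assoc, tensorHom_comp_tensorHom, f.h, g.h,
      ← tensorHom_comp_tensorHom, Category.assoc]
  · -- linear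
    intro M N
    calc (Q.δ M.A N.A ≫ (M.a ⊗ₘ N.a)) ≫ R M.A N.A ≫ (N.a ⊗ₘ M.a)
        = Q.δ M.A N.A ≫ ((M.a ⊗ₘ N.a) ≫ R M.A N.A) ≫ (N.a ⊗ₘ M.a) := by
          simp only [Category.assoc]
      _ = Q.δ M.A N.A ≫ R (T.obj M.A) (T.obj N.A)
            ≫ ((T.map N.a ≫ N.a) ⊗ₘ (T.map M.a ≫ M.a)) := by
          rw [hR.natural M.a N.a]
          simp only [Category.assoc, ← tensorHom_comp_tensorHom]
      _ = (Q.δ M.A N.A ≫ R (T.obj M.A) (T.obj N.A)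
            ≫ (T.μ.app N.A ⊗ₘ T.μ.app M.A)) ≫ (N.a ⊗ₘ M.a) := by
          rw [← N.assoc, ← M.assoc, ← tensorHom_comp_tensorHom]
          simp only [Category.assoc]
      _ = T.map (R M.A N.A) ≫ (Q.δ (T.obj N.A) (T.obj M.A)
            ≫ (T.map N.a ⊗ₘ T.map M.a)) ≫ (N.a ⊗ₘ M.a) := by
          rw [hR.rmat1]
          simp only [Category.assoc]
          rw [tensorHom_comp_tensorHom, N.assoc, M.assoc, ← tensorHom_comp_tensorHom]
      _ = T.map (R M.A N.A ≫ (N.a ⊗ₘ M.a)) ≫ Q.δ N.A M.A ≫ (N.a ⊗ₘ M.a) := by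
          rw [← Q.δ_natural N.a M.a, Functor.map_comp]
          simp only [Category.assoc]
  · -- iso
    intro M N
    obtain ⟨R', hn, h1, h2⟩ := hR.invertible
    refine ⟨⟨R' M.A N.A ≫ (M.a ⊗ₘ N.a), ?_, ?_⟩⟩
    · calc (R M.A N.A ≫ (N.a ⊗ₘ M.a)) ≫ R' M.A N.A ≫ (M.a ⊗ₘ N.a)
          = R M.A N.A ≫ ((N.a ⊗ₘ M.a) ≫ R' M.A N.A) ≫ (M.a ⊗ₘ N.a) := by
            simp only [Category.assoc]
        _ = R M.A N.A ≫ R' (T.obj M.A) (T.obj N.A)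
              ≫ ((T.map M.a ≫ M.a) ⊗ₘ (T.map N.a ≫ N.a)) := by
            rw [hn M.a N.a]; simp only [Category.assoc, ← tensorHom_comp_tensorHom]
        _ = (R M.A N.A ≫ R' (T.obj M.A) (T.obj N.A)
              ≫ (T.μ.app M.A ⊗ₘ T.μ.app N.A)) ≫ (M.a ⊗ₘ N.a) := by
            rw [← M.assoc, ← N.assoc, ← tensorHom_comp_tensorHom]; simp only [Category.assoc]
        _ = 𝟙 _ := by rw [h1 M.A N.A, tensorHom_comp_tensorHom, M.unit, N.unit]; simp
    · calc (R' M.A N.A ≫ (M.a ⊗ₘ N.a)) ≫ R M.A N.A ≫ (N.a ⊗ₘ M.a)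
          = R' M.A N.A ≫ ((M.a ⊗ₘ N.a) ≫ R M.A N.A) ≫ (N.a ⊗ₘ M.a) := by
            simp only [Category.assoc]
        _ = R' M.A N.A ≫ R (T.obj M.A) (T.obj N.A)
              ≫ ((T.map N.a ≫ N.a) ⊗ₘ (T.map M.a ≫ M.a)) := by
            rw [hR.natural M.a N.a]; simp only [Category.assoc, ← tensorHom_comp_tensorHom]
        _ = (R' M.A N.A ≫ R (T.obj M.A) (T.obj N.A)
              ≫ (T.μ.app N.A ⊗ₘ T.μ.app M.A)) ≫ (N.a ⊗ₘ M.a) := by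
            rw [← N.assoc, ← M.assoc, ← tensorHom_comp_tensorHom]; simp only [Category.assoc]
        _ = 𝟙 _ := by rw [h2 M.A N.A, tensorHom_comp_tensorHom, N.unit, M.unit]; simp
  · -- hex1
    intro M N P
    dsimp only [tensorAlgebra]
    have inner : R (T.obj M.A) P.A ≫ (𝟙 (T.obj P.A) ⊗ₘ T.μ.app M.A) ≫ (P.a ⊗ₘ M.a)
        = (M.a ⊗ₘ 𝟙 P.A) ≫ R M.A P.A ≫ (P.a ⊗ₘ M.a) := by
      rw [← Category.assoc (M.a ⊗ₘ 𝟙 P.A), hR.natural M.a (𝟙 P.A), CategoryTheory.Functor.map_id]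
      simp only [Category.assoc, tensorHom_comp_tensorHom, Category.id_comp, Category.comp_id, M.assoc]
    have hb : (𝟙 (T.obj N.A) ⊗ₘ (R (T.obj M.A) P.A ≫ (𝟙 (T.obj P.A) ⊗ₘ T.μ.app M.A)))
          ≫ (N.a ⊗ₘ (P.a ⊗ₘ M.a))
        = (N.a ⊗ₘ (M.a ⊗ₘ 𝟙 P.A)) ≫ (𝟙 N.A ⊗ₘ (R M.A P.A ≫ (P.a ⊗ₘ M.a))) := by
      rw [tensorHom_comp_tensorHom, tensorHom_comp_tensorHom, Category.id_comp, Category.comp_id,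
        Category.assoc, inner]
    have hc : (R M.A N.A ⊗ₘ 𝟙 P.A) ≫ (α_ (T.obj N.A) (T.obj M.A) P.A).hom
          ≫ (N.a ⊗ₘ (M.a ⊗ₘ 𝟙 P.A))
        = ((R M.A N.A ≫ (N.a ⊗ₘ M.a)) ⊗ₘ 𝟙 P.A) ≫ (α_ N.A M.A P.A).hom := by
      rw [← associator_naturality, ← Category.assoc, tensorHom_comp_tensorHom]
      simp only [Category.comp_id, Category.id_comp]
    rw [show ((Q.δ N.A P.A ≫ (N.a ⊗ₘ P.a)) ⊗ₘ M.a)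
        = (Q.δ N.A P.A ⊗ₘ 𝟙 (T.obj M.A)) ≫ ((N.a ⊗ₘ P.a) ⊗ₘ M.a) by
      rw [tensorHom_comp_tensorHom, Category.id_comp]]
    rw [reassoc_of% (hR.rmat3 M.A N.A P.A)]
    try simp only [Category.assoc]
    rw [← associator_inv_naturality, reassoc_of% hb, reassoc_of% hc]
  · -- hex2
    intro M N P
    dsimp only [tensorAlgebra]
    have inner : R M.A (T.obj P.A) ≫ (T.μ.app P.A ⊗ₘ 𝟙 (T.obj M.A)) ≫ (P.a ⊗ₘ M.a)
        = (𝟙 M.A ⊗ₘ P.a) ≫ R M.A P.A ≫ (P.a ⊗ₘ M.a) := by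
      rw [← Category.assoc (𝟙 M.A ⊗ₘ P.a), hR.natural (𝟙 M.A) P.a, CategoryTheory.Functor.map_id]
      simp only [Category.assoc, tensorHom_comp_tensorHom, Category.id_comp, Category.comp_id, P.assoc]
    have hb : ((R M.A (T.obj P.A) ≫ (T.μ.app P.A ⊗ₘ 𝟙 (T.obj M.A))) ⊗ₘ 𝟙 (T.obj N.A))
          ≫ ((P.a ⊗ₘ M.a) ⊗ₘ N.a)
        = ((𝟙 M.A ⊗ₘ P.a) ⊗ₘ N.a) ≫ ((R M.A P.A ≫ (P.a ⊗ₘ M.a)) ⊗ₘ 𝟙 N.A) := by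
      rw [tensorHom_comp_tensorHom, tensorHom_comp_tensorHom, Category.id_comp, Category.comp_id,
        Category.assoc, inner]
    have hc : (𝟙 M.A ⊗ₘ R N.A P.A) ≫ (α_ M.A (T.obj P.A) (T.obj N.A)).inv
          ≫ ((𝟙 M.A ⊗ₘ P.a) ⊗ₘ N.a)
        = (𝟙 M.A ⊗ₘ (R N.A P.A ≫ (P.a ⊗ₘ N.a))) ≫ (α_ M.A P.A N.A).inv := by
      rw [← associator_inv_naturality, ← Category.assoc, tensorHom_comp_tensorHom]
      simp only [Category.comp_id, Category.id_comp]
    rw [show (P.a ⊗ₘ (Q.δ M.A N.A ≫ (M.a ⊗ₘ N.a)))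
        = (𝟙 (T.obj P.A) ⊗ₘ Q.δ M.A N.A) ≫ (P.a ⊗ₘ (M.a ⊗ₘ N.a)) by
      rw [tensorHom_comp_tensorHom, Category.id_comp]]
    rw [reassoc_of% (hR.rmat2 M.A N.A P.A)]
    try simp only [Category.assoc]
    rw [← associator_naturality, reassoc_of% hb, reassoc_of% hc]

end Aux
/-- The free module on `X`. -/
private abbrev fA (T : Monad C) (X : C) : T.Algebra :=
  { A := T.obj X, a := T.μ.app X, unit := T.left_unit X, assoc := (T.assoc X).symm }

private lemma fA_A (T : Monad C) (X : C) : (fA T X).A = T.obj X := rfl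
private lemma fA_a (T : Monad C) (X : C) : (fA T X).a = T.μ.app X := rfl

/-- The action of a module, as a module morphism from the free module. -/
private def actHom (T : Monad C) (M : T.Algebra) : fA T M.A ⟶ M :=
  { f := M.a, h := M.assoc.symm }

/-- Multiplication as a module morphism between free modules. -/
private def muHom (T : Monad C) (X : C) : fA T (T.obj X) ⟶ fA T X :=
  { f := T.μ.app X, h := T.assoc X }

/-- `T.map f` as a module morphism between free modules. -/
private def mapHom (T : Monad C) {X Y : C} (f : X ⟶ Y) : fA T X ⟶ fA T Y :=
  { f := T.map f, h := by exact T.μ.naturality f }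

/-- The comultiplication as a module morphism from a free module into a tensor
product of free modules. -/
private def deltaHom {T : Monad C} {Q : Comonoidal T.toFunctor} (hB : IsBimonad T Q)
    (X Y : C) : fA T (X ⊗ Y) ⟶ tensorAlgebra T Q hB (fA T X) (fA T Y) :=
  { f := Q.δ X Y
    h := by
      dsimp [tensorAlgebra, fA, Monad.free]
      rw [hB.mu_δ]
      try simp only [Category.assoc] }

section Backward
variable {T : Monad C} {Q : Comonoidal T.toFunctor} {hB : IsBimonad T Q}
variable {τ : ∀ M N : T.Algebra, M.A ⊗ N.A ⟶ N.A ⊗ M.A}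

private lemma eta_pair (X Y : C) :
    (T.η.app (T.obj X) ⊗ₘ T.η.app (T.obj Y)) ≫ (T.μ.app X ⊗ₘ T.μ.app Y) = 𝟙 _ := by
  rw [tensorHom_comp_tensorHom, T.left_unit, T.left_unit]; simp

private lemma map_eta_pair (X Y : C) :
    (T.map (T.η.app X) ⊗ₘ T.map (T.η.app Y)) ≫ (T.μ.app X ⊗ₘ T.μ.app Y) = 𝟙 _ := by
  rw [tensorHom_comp_tensorHom, T.right_unit, T.right_unit]; simp

variable (hτ : IsBraidingOnModules T Q hB τ)
include hτ

/-- Compatibility: the candidate R-matrix recovers `τ` on all modules. -/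
private lemma compat (M N : T.Algebra) :
    ((T.η.app M.A ⊗ₘ T.η.app N.A) ≫ τ (fA T M.A) (fA T N.A)) ≫ (N.a ⊗ₘ M.a) = τ M N := by
  have h := hτ.natural (actHom T M) (actHom T N)
  dsimp only [actHom] at h
  rw [Category.assoc, ← h, ← Category.assoc, tensorHom_comp_tensorHom, M.unit, N.unit]
  simp

private lemma Rnat {X X' Y Y' : C} (f : X ⟶ X') (g : Y ⟶ Y') :
    (f ⊗ₘ g) ≫ (T.η.app X' ⊗ₘ T.η.app Y') ≫ τ (fA T X') (fA T Y')
      = ((T.η.app X ⊗ₘ T.η.app Y) ≫ τ (fA T X) (fA T Y)) ≫ (T.map g ⊗ₘ T.map f) := by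
  have h := hτ.natural (mapHom T f) (mapHom T g)
  dsimp only [mapHom] at h
  have nf : f ≫ T.η.app X' = T.η.app X ≫ T.map f := T.η.naturality f
  have ng : g ≫ T.η.app Y' = T.η.app Y ≫ T.map g := T.η.naturality g
  rw [← Category.assoc, tensorHom_comp_tensorHom, nf, ng, ← tensorHom_comp_tensorHom,
    Category.assoc, h, Category.assoc]

private lemma mu_push (X Y : C) :
    τ (fA T (T.obj X)) (fA T (T.obj Y)) ≫ (T.μ.app Y ⊗ₘ T.μ.app X)
      = (T.μ.app X ⊗ₘ T.μ.app Y) ≫ τ (fA T X) (fA T Y) := by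
  have h := hτ.natural (muHom T X) (muHom T Y)
  dsimp only [muHom] at h
  rw [h]

end Backward
section Backward2
variable {T : Monad C} {Q : Comonoidal T.toFunctor} {hB : IsBimonad T Q}
variable {τ : ∀ M N : T.Algebra, M.A ⊗ N.A ⟶ N.A ⊗ M.A}
variable (hτ : IsBraidingOnModules T Q hB τ)
include hτ

private lemma Rmat1 (X Y : C) :
    Q.δ X Y ≫ ((T.η.app (T.obj X) ⊗ₘ T.η.app (T.obj Y))
        ≫ τ (fA T (T.obj X)) (fA T (T.obj Y))) ≫ (T.μ.app Y ⊗ₘ T.μ.app X)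
      = T.map ((T.η.app X ⊗ₘ T.η.app Y) ≫ τ (fA T X) (fA T Y))
        ≫ Q.δ (T.obj Y) (T.obj X) ≫ (T.μ.app Y ⊗ₘ T.μ.app X) := by
  have hlin : (Q.δ (T.obj X) (T.obj Y) ≫ (T.μ.app X ⊗ₘ T.μ.app Y)) ≫ τ (fA T X) (fA T Y)
      = T.map (τ (fA T X) (fA T Y)) ≫ Q.δ (T.obj Y) (T.obj X) ≫ (T.μ.app Y ⊗ₘ T.μ.app X) :=
    hτ.linear (fA T X) (fA T Y)
  calc Q.δ X Y ≫ ((T.η.app (T.obj X) ⊗ₘ T.η.app (T.obj Y))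
          ≫ τ (fA T (T.obj X)) (fA T (T.obj Y))) ≫ (T.μ.app Y ⊗ₘ T.μ.app X)
      = Q.δ X Y ≫ (T.η.app (T.obj X) ⊗ₘ T.η.app (T.obj Y))
          ≫ (T.μ.app X ⊗ₘ T.μ.app Y) ≫ τ (fA T X) (fA T Y) := by
        simp only [Category.assoc]
        rw [← mu_push hτ X Y]
    _ = Q.δ X Y ≫ τ (fA T X) (fA T Y) := by
        rw [reassoc_of% (eta_pair (T := T) X Y)]
    _ = T.map (T.η.app X ⊗ₘ T.η.app Y) ≫ (Q.δ (T.obj X) (T.obj Y)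
          ≫ (T.μ.app X ⊗ₘ T.μ.app Y)) ≫ τ (fA T X) (fA T Y) := by
        simp only [Category.assoc]
        rw [reassoc_of% (Q.δ_natural (T := T) (T.η.app X) (T.η.app Y)),
          reassoc_of% (map_eta_pair (T := T) X Y)]
    _ = T.map ((T.η.app X ⊗ₘ T.η.app Y) ≫ τ (fA T X) (fA T Y))
          ≫ Q.δ (T.obj Y) (T.obj X) ≫ (T.μ.app Y ⊗ₘ T.μ.app X) := by
        rw [CategoryTheory.Functor.map_comp]
        simp only [Category.assoc]
        rw [← hlin]
        try simp only [Category.assoc]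

private lemma mu_right (X Z : C) :
    ((T.η.app X ⊗ₘ T.η.app (T.obj Z)) ≫ τ (fA T X) (fA T (T.obj Z)))
        ≫ (T.μ.app Z ⊗ₘ 𝟙 (T.obj X))
      = (T.η.app X ⊗ₘ 𝟙 (T.obj Z)) ≫ τ (fA T X) (fA T Z) := by
  have h : (𝟙 (T.obj X) ⊗ₘ T.μ.app Z) ≫ τ (fA T X) (fA T Z)
      = τ (fA T X) (fA T (T.obj Z)) ≫ (T.μ.app Z ⊗ₘ 𝟙 (T.obj X)) :=
    hτ.natural (𝟙 (fA T X)) (muHom T Z)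
  rw [Category.assoc, ← h, ← Category.assoc, tensorHom_comp_tensorHom, T.left_unit,
    Category.comp_id]
  rfl

private lemma mu_left (X Z : C) :
    ((T.η.app (T.obj X) ⊗ₘ T.η.app Z) ≫ τ (fA T (T.obj X)) (fA T Z))
        ≫ (𝟙 (T.obj Z) ⊗ₘ T.μ.app X)
      = (𝟙 (T.obj X) ⊗ₘ T.η.app Z) ≫ τ (fA T X) (fA T Z) := by
  have h : (T.μ.app X ⊗ₘ 𝟙 (T.obj Z)) ≫ τ (fA T X) (fA T Z)
      = τ (fA T (T.obj X)) (fA T Z) ≫ (𝟙 (T.obj Z) ⊗ₘ T.μ.app X) :=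
    hτ.natural (muHom T X) (𝟙 (fA T Z))
  rw [Category.assoc, ← h, ← Category.assoc, tensorHom_comp_tensorHom, T.left_unit,
    Category.comp_id]
  rfl

private lemma Rmat2 (X Y Z : C) :
    ((T.η.app (X ⊗ Y) ⊗ₘ T.η.app Z) ≫ τ (fA T (X ⊗ Y)) (fA T Z))
        ≫ (𝟙 (T.obj Z) ⊗ₘ Q.δ X Y)
      = (α_ X Y Z).hom
        ≫ (𝟙 X ⊗ₘ ((T.η.app Y ⊗ₘ T.η.app Z) ≫ τ (fA T Y) (fA T Z)))
        ≫ (α_ X (T.obj Z) (T.obj Y)).inv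
        ≫ ((((T.η.app X ⊗ₘ T.η.app (T.obj Z)) ≫ τ (fA T X) (fA T (T.obj Z)))
            ≫ (T.μ.app Z ⊗ₘ 𝟙 (T.obj X))) ⊗ₘ 𝟙 (T.obj Y))
        ≫ (α_ (T.obj Z) (T.obj X) (T.obj Y)).hom := by
  have hdel : (Q.δ X Y ⊗ₘ 𝟙 (T.obj Z))
        ≫ τ (tensorAlgebra T Q hB (fA T X) (fA T Y)) (fA T Z)
      = τ (fA T (X ⊗ Y)) (fA T Z) ≫ (𝟙 (T.obj Z) ⊗ₘ Q.δ X Y) :=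
    hτ.natural (deltaHom hB X Y) (𝟙 (fA T Z))
  rw [mu_right hτ X Z]
  refine Eq.trans (b := (T.η.app (X ⊗ Y) ⊗ₘ T.η.app Z) ≫ (Q.δ X Y ⊗ₘ 𝟙 (T.obj Z))
            ≫ τ (tensorAlgebra T Q hB (fA T X) (fA T Y)) (fA T Z)) ?_
    (Eq.trans (b := ((T.η.app X ⊗ₘ T.η.app Y) ⊗ₘ T.η.app Z)
            ≫ τ (tensorAlgebra T Q hB (fA T X) (fA T Y)) (fA T Z)) ?_
    (Eq.trans (b := ((T.η.app X ⊗ₘ T.η.app Y) ⊗ₘ T.η.app Z) ≫ (α_ (T.obj X) (T.obj Y) (T.obj Z)).hom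
            ≫ (𝟙 (T.obj X) ⊗ₘ τ (fA T Y) (fA T Z))
            ≫ (α_ (T.obj X) (T.obj Z) (T.obj Y)).inv
            ≫ (τ (fA T X) (fA T Z) ⊗ₘ 𝟙 (T.obj Y))
            ≫ (α_ (T.obj Z) (T.obj X) (T.obj Y)).hom) ?_ ?_))
  · rw [Category.assoc, ← hdel]
    rfl
  · have e2 : (T.η.app (X ⊗ Y) ⊗ₘ T.η.app Z) ≫ (Q.δ X Y ⊗ₘ 𝟙 (T.obj Z))
        = ((T.η.app X ⊗ₘ T.η.app Y) ⊗ₘ T.η.app Z) := by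
      rw [tensorHom_comp_tensorHom, hB.eta_δ, Category.comp_id]
    exact (Category.assoc _ _ _).symm.trans
      (congrArg (fun f => f ≫ τ (tensorAlgebra T Q hB (fA T X) (fA T Y)) (fA T Z)) e2)
  · rw [hτ.hex2 (fA T X) (fA T Y) (fA T Z)]
    rfl
  · rw [reassoc_of% (associator_naturality (T.η.app X) (T.η.app Y) (T.η.app Z))]
    have s1 : (T.η.app X ⊗ₘ (T.η.app Y ⊗ₘ T.η.app Z))
          ≫ (𝟙 (T.obj X) ⊗ₘ τ (fA T Y) (fA T Z))
        = (𝟙 X ⊗ₘ ((T.η.app Y ⊗ₘ T.η.app Z) ≫ τ (fA T Y) (fA T Z)))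
          ≫ (T.η.app X ⊗ₘ (𝟙 (T.obj Z) ⊗ₘ 𝟙 (T.obj Y))) := by
      rw [tensorHom_comp_tensorHom, tensorHom_comp_tensorHom]
      simp
    rw [reassoc_of% s1,
      reassoc_of% (associator_inv_naturality (T.η.app X) (𝟙 (T.obj Z)) (𝟙 (T.obj Y)))]
    have s2 : ((T.η.app X ⊗ₘ 𝟙 (T.obj Z)) ⊗ₘ 𝟙 (T.obj Y))
          ≫ (τ (fA T X) (fA T Z) ⊗ₘ 𝟙 (T.obj Y))
        = (((T.η.app X ⊗ₘ 𝟙 (T.obj Z)) ≫ τ (fA T X) (fA T Z)) ⊗ₘ 𝟙 (T.obj Y)) := by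
      rw [tensorHom_comp_tensorHom]
      simp
    rw [reassoc_of% s2]

private lemma Rmat3 (X Y Z : C) :
    ((T.η.app X ⊗ₘ T.η.app (Y ⊗ Z)) ≫ τ (fA T X) (fA T (Y ⊗ Z)))
        ≫ (Q.δ Y Z ⊗ₘ 𝟙 (T.obj X))
      = (α_ X Y Z).inv
        ≫ (((T.η.app X ⊗ₘ T.η.app Y) ≫ τ (fA T X) (fA T Y)) ⊗ₘ 𝟙 Z)
        ≫ (α_ (T.obj Y) (T.obj X) Z).hom
        ≫ (𝟙 (T.obj Y) ⊗ₘ (((T.η.app (T.obj X) ⊗ₘ T.η.app Z)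
            ≫ τ (fA T (T.obj X)) (fA T Z)) ≫ (𝟙 (T.obj Z) ⊗ₘ T.μ.app X)))
        ≫ (α_ (T.obj Y) (T.obj Z) (T.obj X)).inv := by
  have hdel : (𝟙 (T.obj X) ⊗ₘ Q.δ Y Z)
        ≫ τ (fA T X) (tensorAlgebra T Q hB (fA T Y) (fA T Z))
      = τ (fA T X) (fA T (Y ⊗ Z)) ≫ (Q.δ Y Z ⊗ₘ 𝟙 (T.obj X)) :=
    hτ.natural (𝟙 (fA T X)) (deltaHom hB Y Z)
  rw [mu_left hτ X Z]
  refine Eq.trans (b := (T.η.app X ⊗ₘ T.η.app (Y ⊗ Z)) ≫ (𝟙 (T.obj X) ⊗ₘ Q.δ Y Z)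
            ≫ τ (fA T X) (tensorAlgebra T Q hB (fA T Y) (fA T Z))) ?_
    (Eq.trans (b := (T.η.app X ⊗ₘ (T.η.app Y ⊗ₘ T.η.app Z))
            ≫ τ (fA T X) (tensorAlgebra T Q hB (fA T Y) (fA T Z))) ?_
    (Eq.trans (b := (T.η.app X ⊗ₘ (T.η.app Y ⊗ₘ T.η.app Z)) ≫ (α_ (T.obj X) (T.obj Y) (T.obj Z)).inv
            ≫ (τ (fA T X) (fA T Y) ⊗ₘ 𝟙 (T.obj Z))
            ≫ (α_ (T.obj Y) (T.obj X) (T.obj Z)).hom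
            ≫ (𝟙 (T.obj Y) ⊗ₘ τ (fA T X) (fA T Z))
            ≫ (α_ (T.obj Y) (T.obj Z) (T.obj X)).inv) ?_ ?_))
  · rw [Category.assoc, ← hdel]
    rfl
  · have e2 : (T.η.app X ⊗ₘ T.η.app (Y ⊗ Z)) ≫ (𝟙 (T.obj X) ⊗ₘ Q.δ Y Z)
        = (T.η.app X ⊗ₘ (T.η.app Y ⊗ₘ T.η.app Z)) := by
      rw [tensorHom_comp_tensorHom, hB.eta_δ, Category.comp_id]
    exact (Category.assoc _ _ _).symm.trans
      (congrArg (fun f => f ≫ τ (fA T X) (tensorAlgebra T Q hB (fA T Y) (fA T Z))) e2)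
  · rw [hτ.hex1 (fA T X) (fA T Y) (fA T Z)]
    rfl
  · rw [reassoc_of% (associator_inv_naturality (T.η.app X) (T.η.app Y) (T.η.app Z))]
    have s1 : ((T.η.app X ⊗ₘ T.η.app Y) ⊗ₘ T.η.app Z)
          ≫ (τ (fA T X) (fA T Y) ⊗ₘ 𝟙 (T.obj Z))
        = (((T.η.app X ⊗ₘ T.η.app Y) ≫ τ (fA T X) (fA T Y)) ⊗ₘ 𝟙 Z)
          ≫ ((𝟙 (T.obj Y) ⊗ₘ 𝟙 (T.obj X)) ⊗ₘ T.η.app Z) := by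
      rw [tensorHom_comp_tensorHom, tensorHom_comp_tensorHom]
      simp
    rw [reassoc_of% s1,
      reassoc_of% (associator_naturality (𝟙 (T.obj Y)) (𝟙 (T.obj X)) (T.η.app Z))]
    have s2 : (𝟙 (T.obj Y) ⊗ₘ (𝟙 (T.obj X) ⊗ₘ T.η.app Z))
          ≫ (𝟙 (T.obj Y) ⊗ₘ τ (fA T X) (fA T Z))
        = (𝟙 (T.obj Y) ⊗ₘ ((𝟙 (T.obj X) ⊗ₘ T.η.app Z) ≫ τ (fA T X) (fA T Z))) := by
      rw [tensorHom_comp_tensorHom]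
      simp
    rw [reassoc_of% s2]

end Backward2
section Backward3
variable {T : Monad C} {Q : Comonoidal T.toFunctor} {hB : IsBimonad T Q}
variable {τ : ∀ M N : T.Algebra, M.A ⊗ N.A ⟶ N.A ⊗ M.A}
variable [∀ M N : T.Algebra, IsIso (τ M N)]
variable (hτ : IsBraidingOnModules T Q hB τ)
include hτ

private lemma tinv_nat {M M' N N' : T.Algebra} (f : M ⟶ M') (g : N ⟶ N') :
    (g.f ⊗ₘ f.f) ≫ inv (τ M' N') = inv (τ M N) ≫ (f.f ⊗ₘ g.f) := by
  rw [IsIso.comp_inv_eq, Category.assoc, hτ.natural f g, IsIso.inv_hom_id_assoc]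

private lemma Rinv_nat {X X' Y Y' : C} (f : X ⟶ X') (g : Y ⟶ Y') :
    (g ⊗ₘ f) ≫ ((T.η.app Y' ⊗ₘ T.η.app X') ≫ inv (τ (fA T X') (fA T Y')))
      = ((T.η.app Y ⊗ₘ T.η.app X) ≫ inv (τ (fA T X) (fA T Y)))
        ≫ (T.map f ⊗ₘ T.map g) := by
  have h : (T.map g ⊗ₘ T.map f) ≫ inv (τ (fA T X') (fA T Y'))
      = inv (τ (fA T X) (fA T Y)) ≫ (T.map f ⊗ₘ T.map g) :=
    tinv_nat hτ (mapHom T f) (mapHom T g)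
  have nf : f ≫ T.η.app X' = T.η.app X ≫ T.map f := T.η.naturality f
  have ng : g ≫ T.η.app Y' = T.η.app Y ≫ T.map g := T.η.naturality g
  rw [← Category.assoc, tensorHom_comp_tensorHom, ng, nf, ← tensorHom_comp_tensorHom, Category.assoc, h,
    ← Category.assoc]

private lemma Rinv1 (X Y : C) :
    ((T.η.app X ⊗ₘ T.η.app Y) ≫ τ (fA T X) (fA T Y))
      ≫ ((T.η.app (T.obj Y) ⊗ₘ T.η.app (T.obj X))
          ≫ inv (τ (fA T (T.obj X)) (fA T (T.obj Y)))) ≫ (T.μ.app X ⊗ₘ T.μ.app Y)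
      = T.η.app X ⊗ₘ T.η.app Y := by
  have h : (T.μ.app Y ⊗ₘ T.μ.app X) ≫ inv (τ (fA T X) (fA T Y))
      = inv (τ (fA T (T.obj X)) (fA T (T.obj Y))) ≫ (T.μ.app X ⊗ₘ T.μ.app Y) :=
    tinv_nat hτ (muHom T X) (muHom T Y)
  simp only [Category.assoc]
  rw [← h, reassoc_of% (eta_pair (T := T) Y X)]
  simp

private lemma Rinv2 (X Y : C) :
    ((T.η.app Y ⊗ₘ T.η.app X) ≫ inv (τ (fA T X) (fA T Y)))
      ≫ ((T.η.app (T.obj X) ⊗ₘ T.η.app (T.obj Y))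
          ≫ τ (fA T (T.obj X)) (fA T (T.obj Y))) ≫ (T.μ.app Y ⊗ₘ T.μ.app X)
      = T.η.app Y ⊗ₘ T.η.app X := by
  simp only [Category.assoc]
  rw [mu_push hτ X Y, reassoc_of% (eta_pair (T := T) X Y)]
  simp

end Backward3

set_option maxHeartbeats 1000000 in
/-- For a bimonad `T` on a monoidal category, any R-matrix `R`
induces a braiding on the category of `T`-modules by
`τ_{(M,r),(N,s)} = (s ⊗ₘ r) ∘ R_{M,N}`, and this assignment is a bijection between
R-matrices for `T` and braidings on `T`-Mod. -/
theorem stmt19 (T : Monad C) (Q : Comonoidal T.toFunctor) (hB : IsBimonad T Q) :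
    (∀ R : ∀ X Y : C, X ⊗ Y ⟶ T.obj Y ⊗ T.obj X, IsRMatrix T Q R →
      IsBraidingOnModules T Q hB (fun M N => R M.A N.A ≫ (N.a ⊗ₘ M.a))) ∧
    (∀ τ : ∀ M N : T.Algebra, M.A ⊗ N.A ⟶ N.A ⊗ M.A,
      IsBraidingOnModules T Q hB τ →
      ∃! R : ∀ X Y : C, X ⊗ Y ⟶ T.obj Y ⊗ T.obj X,
        IsRMatrix T Q R ∧ ∀ M N : T.Algebra, τ M N = R M.A N.A ≫ (N.a ⊗ₘ M.a)) := by
  constructor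
  · intro R hR
    exact forward_dir R hR
  · intro τ hτ
    haveI : ∀ M N : T.Algebra, IsIso (τ M N) := hτ.iso
    refine ⟨fun X Y => (T.η.app X ⊗ₘ T.η.app Y) ≫ τ (fA T X) (fA T Y),
      ⟨⟨?_, ?_, ?_, ?_, ?_⟩, ?_⟩, ?_⟩
    · intro X X' Y Y' f g
      exact Rnat hτ f g
    · exact ⟨fun X Y => (T.η.app Y ⊗ₘ T.η.app X) ≫ inv (τ (fA T X) (fA T Y)),
        fun f g => Rinv_nat hτ f g, fun X Y => Rinv1 hτ X Y, fun X Y => Rinv2 hτ X Y⟩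
    · exact fun X Y => Rmat1 hτ X Y
    · exact fun X Y Z => Rmat2 hτ X Y Z
    · exact fun X Y Z => Rmat3 hτ X Y Z
    · intro M N
      exact (compat hτ M N).symm
    · rintro R' ⟨hR', hcomp⟩
      funext X Y
      show R' X Y = (T.η.app X ⊗ₘ T.η.app Y) ≫ τ (fA T X) (fA T Y)
      have e : τ (fA T X) (fA T Y) = R' (T.obj X) (T.obj Y) ≫ (T.μ.app Y ⊗ₘ T.μ.app X) :=
        hcomp (fA T X) (fA T Y)
      rw [e, ← Category.assoc, hR'.natural (T.η.app X) (T.η.app Y), Category.assoc,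
        map_eta_pair (T := T) Y X, Category.comp_id]
      rfl

end HopfMonadPaper
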